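/- Let Δ̇ be the root system of type B_l realized in Q = ℤα₁ ⊕ ... ⊕ ℤα_l with the bilinear form where long roots have squared length 1. If α, α', and α+α' are all roots in Δ̇, then ε(α,α') = -ε(α',α), where ε is the bimultiplicative cocycle with ε(α_i,α_j) = -1 iff i = j+1. -/

import Mathlib

open Finset

/-- The short root `α_i + α_{i+1} + ... + α_l` of `B_l`, as a coefficient vector. -/
def sroot (l : ℕ) (i : Fin l) : Fin l → ℤ := fun k => if i ≤ k then 1 else 0

/-- The set `Δ_S` of short roots `±(α_i + ... + α_l)` of `B_l`. -/
def ShortS (l : ℕ) : Set (Fin l → ℤ) := {x | ∃ i, x = sroot l i ∨ x = -sroot l i}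

/-- The set `Δ_M` of middle-length roots of `B_l`:
`±((α_i+...+α_l) ± (α_j+...+α_l))` for `i < j`. -/
def MidS (l : ℕ) : Set (Fin l → ℤ) :=
  {x | ∃ i j : Fin l, i < j ∧ (x = sroot l i - sroot l j ∨ x = sroot l j - sroot l i ∨
      x = sroot l i + sroot l j ∨ x = -(sroot l i + sroot l j))}

/-- The set `Δ_L = {2γ : γ ∈ Δ_S}` of long roots of the folded system. -/
def LongS (l : ℕ) : Set (Fin l → ℤ) := {x | ∃ γ ∈ ShortS l, x = 2 • γ}

/-- The root system `Δ̇` of `B_l`. -/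
def RootsB (l : ℕ) : Set (Fin l → ℤ) := ShortS l ∪ MidS l

/-- Gram matrix entries of the normalized `B_l` form:
`(α_i,α_i) = 1` for `i < l`, `(α_l,α_l) = 1/2`, `(α_i,α_j) = -1/2` for `|i-j| = 1`,
and `0` for `|i-j| > 1`. -/
def gram (l : ℕ) (i j : Fin l) : ℚ :=
  if i = j then (if (i : ℕ) = l - 1 then 1/2 else 1)
  else if ((i : ℤ) - (j : ℤ)).natAbs = 1 then -1/2 else 0

/-- The normalized `B_l` bilinear form on coefficient vectors. -/
def formQ (l : ℕ) (x y : Fin l → ℚ) : ℚ := ∑ i, ∑ j, x i * y j * gram l i j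

/-- Coercion of an integer coefficient vector to a rational one. -/
def qc {l : ℕ} (x : Fin l → ℤ) : Fin l → ℚ := fun i => (x i : ℚ)

/-- The weight `λ = Σ_{i=1}^l (i/2) α_i` as a coefficient vector. -/
def lamQ (l : ℕ) : Fin l → ℚ := fun i => ((i : ℕ) + 1) / 2

/-- The 2-cocycle `ε` with `ε(α_i,α_j) = -1` iff `i = j+1`, extended bimultiplicatively. -/
def epsf (l : ℕ) (a b : Fin l → ℤ) : ℤˣ :=
  ∏ i : Fin l, ∏ j : Fin l, (if (i : ℕ) = (j : ℕ) + 1 then (-1 : ℤˣ) else 1) ^ (a i * b j)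

/-- Coefficient-wise reduction mod 2 keeping the sign:
`p₀(Σ k_i α_i) = Σ sgn(k_i)(k_i - 2⌊k_i/2⌋) α_i`. -/
def p0 {l : ℕ} (x : Fin l → ℤ) : Fin l → ℤ :=
  fun i => (if 0 ≤ x i then 1 else -1) * (x i % 2)

-- auxiliary defs
def extv {l : ℕ} (x : Fin l → ℤ) : ℕ → ℤ := fun k => if h : k < l then x ⟨k, h⟩ else 0
def dv {l : ℕ} (x : Fin l → ℤ) (k : ℕ) : ℤ := extv x (k+1) - extv x k
def Pf {l : ℕ} (a b : Fin l → ℤ) : ℤ := extv a 0 * extv b 0 + ∑ k ∈ range l, dv a k * dv b k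
def Qf {l : ℕ} (x : Fin l → ℤ) : ℤ := Pf x x
def S1 {l : ℕ} (a b : Fin l → ℤ) : ℤ :=
  ∑ k ∈ range l, (extv a (k+1) * extv b k + extv a k * extv b (k+1))
def Ef {l : ℕ} (a b : Fin l → ℤ) : ℤ :=
  ∑ i : Fin l, ∑ j : Fin l, if (i : ℕ) = (j : ℕ) + 1 then a i * b j else 0

variable {l : ℕ}

lemma extv_add (x y : Fin l → ℤ) (k : ℕ) : extv (x + y) k = extv x k + extv y k := by
  unfold extv; split <;> simp
lemma extv_neg (x : Fin l → ℤ) (k : ℕ) : extv (-x) k = -extv x k := by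
  unfold extv; split <;> simp
lemma extv_sub (x y : Fin l → ℤ) (k : ℕ) : extv (x - y) k = extv x k - extv y k := by
  unfold extv; split <;> simp
lemma extv_last (x : Fin l → ℤ) : extv x l = 0 := dif_neg (lt_irrefl l)
lemma extv_sroot (i : Fin l) (k : ℕ) :
    extv (sroot l i) k = if (i : ℕ) ≤ k ∧ k < l then 1 else 0 := by
  unfold extv sroot
  split
  · next h => simp only [Fin.le_def]; split_ifs <;> omega
  · next h => split_ifs <;> omega

lemma dv_add (x y : Fin l → ℤ) (k : ℕ) : dv (x + y) k = dv x k + dv y k := by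
  simp [dv, extv_add]; ring
lemma dv_neg (x : Fin l → ℤ) (k : ℕ) : dv (-x) k = -dv x k := by
  simp [dv, extv_neg]; ring
lemma dv_sub (x y : Fin l → ℤ) (k : ℕ) : dv (x - y) k = dv x k - dv y k := by
  simp [dv, extv_sub]; ring
lemma dv_sroot (i : Fin l) (k : ℕ) :
    dv (sroot l i) k = (if k + 1 = (i : ℕ) then 1 else 0) - (if k + 1 = l then 1 else 0) := by
  have hi := i.isLt
  simp only [dv, extv_sroot]
  split_ifs <;> omega

lemma sum_spike (n t : ℕ) :
    ∑ k ∈ range n, (if k + 1 = t then (1:ℤ) else 0) = if 1 ≤ t ∧ t ≤ n then 1 else 0 := by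
  induction n with
  | zero => simp; omega
  | succ n ih =>
    rw [Finset.sum_range_succ, ih]
    split_ifs <;> omega

lemma key_id (A B : ℕ → ℤ) (n : ℕ) :
    (∑ k ∈ range n, (A (k+1) * B k + A k * B (k+1))) +
      (A 0 * B 0 + ∑ k ∈ range n, (A (k+1) - A k) * (B (k+1) - B k)) =
    2 * (∑ k ∈ range n, A k * B k) + A n * B n := by
  induction n with
  | zero => simp
  | succ n ih =>
    simp only [Finset.sum_range_succ]
    linear_combination ih

lemma Q_sroot (i : Fin l) : Qf (sroot l i) = 2 := by
  have hi := i.isLt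
  unfold Qf Pf
  have h1 : ∀ k ∈ range l, dv (sroot l i) k * dv (sroot l i) k =
      (if k + 1 = (i : ℕ) then (1:ℤ) else 0) + (if k + 1 = l then 1 else 0) := by
    intro k _
    rw [dv_sroot]
    split_ifs <;> omega
  rw [Finset.sum_congr rfl h1, Finset.sum_add_distrib, sum_spike, sum_spike, extv_sroot]
  split_ifs <;> omega

lemma Q_mid_sub (i j : Fin l) (hij : i < j) : Qf (sroot l i - sroot l j) = 2 := by
  have hi := i.isLt
  have hj := j.isLt
  have hij' : (i : ℕ) < (j : ℕ) := hij
  unfold Qf Pf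
  have h1 : ∀ k ∈ range l, dv (sroot l i - sroot l j) k * dv (sroot l i - sroot l j) k =
      (if k + 1 = (i : ℕ) then (1:ℤ) else 0) + (if k + 1 = (j : ℕ) then 1 else 0) := by
    intro k _
    rw [dv_sub, dv_sroot, dv_sroot]
    split_ifs <;> omega
  rw [Finset.sum_congr rfl h1, Finset.sum_add_distrib, sum_spike, sum_spike,
    extv_sub, extv_sroot, extv_sroot]
  split_ifs <;> omega

lemma Q_mid_add (i j : Fin l) (hij : i < j) : Qf (sroot l i + sroot l j) = 6 := by
  have hi := i.isLt
  have hj := j.isLt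
  have hij' : (i : ℕ) < (j : ℕ) := hij
  unfold Qf Pf
  have h1 : ∀ k ∈ range l, dv (sroot l i + sroot l j) k * dv (sroot l i + sroot l j) k =
      (if k + 1 = (i : ℕ) then (1:ℤ) else 0) + (if k + 1 = (j : ℕ) then 1 else 0) +
        4 * (if k + 1 = l then 1 else 0) := by
    intro k _
    rw [dv_add, dv_sroot, dv_sroot]
    split_ifs <;> omega
  rw [Finset.sum_congr rfl h1, Finset.sum_add_distrib, Finset.sum_add_distrib,
    ← Finset.mul_sum, sum_spike, sum_spike, sum_spike, extv_add, extv_sroot, extv_sroot]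
  split_ifs <;> omega

lemma Q_neg (x : Fin l → ℤ) : Qf (-x) = Qf x := by
  unfold Qf Pf
  have h1 : ∀ k ∈ range l, dv (-x) k * dv (-x) k = dv x k * dv x k := by
    intro k _; rw [dv_neg]; ring
  rw [Finset.sum_congr rfl h1, extv_neg]; ring

lemma Q_root {x : Fin l → ℤ} (hx : x ∈ RootsB l) : Qf x % 4 = 2 := by
  rcases hx with ⟨i, h | h⟩ | ⟨i, j, hij, h | h | h | h⟩
  · rw [h, Q_sroot]; rfl
  · rw [h, Q_neg, Q_sroot]; rfl
  · rw [h, Q_mid_sub i j hij]; rfl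
  · rw [show x = -(sroot l i - sroot l j) by rw [h]; ring, Q_neg, Q_mid_sub i j hij]; rfl
  · rw [h, Q_mid_add i j hij]; rfl
  · rw [h, Q_neg, Q_mid_add i j hij]; rfl

lemma Q_add (a b : Fin l → ℤ) : Qf (a + b) = Qf a + Qf b + 2 * Pf a b := by
  unfold Qf Pf
  have h1 : ∀ k ∈ range l, dv (a + b) k * dv (a + b) k =
      dv a k * dv a k + dv b k * dv b k + 2 * (dv a k * dv b k) := by
    intro k _; rw [dv_add]; ring
  rw [Finset.sum_congr rfl h1, Finset.sum_add_distrib, Finset.sum_add_distrib,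
    ← Finset.mul_sum, extv_add]
  ring

lemma P_odd {a b : Fin l → ℤ} (ha : a ∈ RootsB l) (hb : b ∈ RootsB l)
    (hab : a + b ∈ RootsB l) : Pf a b % 2 = 1 := by
  have h1 := Q_root ha
  have h2 := Q_root hb
  have h3 := Q_root hab
  have h4 := Q_add a b
  omega

lemma S1_eq (a b : Fin l → ℤ) : S1 a b = 2 * (∑ k ∈ range l, extv a k * extv b k) - Pf a b := by
  have h := key_id (extv a) (extv b) l
  rw [extv_last, extv_last] at h
  simp only [S1, Pf, dv]
  simp only [mul_zero, add_zero] at h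
  linarith [h]

lemma S1_odd {a b : Fin l → ℤ} (ha : a ∈ RootsB l) (hb : b ∈ RootsB l)
    (hab : a + b ∈ RootsB l) : S1 a b % 2 = 1 := by
  have := P_odd ha hb hab
  rw [S1_eq]
  omega

-- units side
lemma ite_zpow (c : Prop) [Decidable c] (m : ℤ) :
    (if c then (-1 : ℤˣ) else 1) ^ m = (-1 : ℤˣ) ^ (if c then m else 0) := by
  split
  · rfl
  · rw [one_zpow, zpow_zero]

lemma prod_neg_one_zpow {ι : Type*} (s : Finset ι) (f : ι → ℤ) :
    ∏ i ∈ s, (-1 : ℤˣ) ^ (f i) = (-1 : ℤˣ) ^ (∑ i ∈ s, f i) := by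
  classical
  induction s using Finset.induction with
  | empty => simp
  | insert _ _ hni ih => rw [Finset.prod_insert hni, Finset.sum_insert hni, ih, zpow_add]

lemma epsf_eq (a b : Fin l → ℤ) : epsf l a b = (-1 : ℤˣ) ^ (Ef a b) := by
  unfold epsf Ef
  simp_rw [ite_zpow, prod_neg_one_zpow]

lemma fin_sum_ite (m : ℕ) (f : Fin l → ℤ) :
    ∑ i : Fin l, (if (i : ℕ) = m then f i else 0) = if h : m < l then f ⟨m, h⟩ else 0 := by
  split
  · next h =>
    rw [Finset.sum_eq_single (⟨m, h⟩ : Fin l)]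
    · simp
    · intro i _ hne
      rw [if_neg]
      exact fun hc => hne (Fin.ext hc)
    · intro h'
      exact absurd (Finset.mem_univ _) h'
  · next h =>
    apply Finset.sum_eq_zero
    intro i _
    rw [if_neg]
    intro hc
    exact h (hc ▸ i.isLt)

lemma E_add_E (a b : Fin l → ℤ) : Ef a b + Ef b a = S1 a b := by
  unfold Ef
  rw [← Finset.sum_add_distrib]
  have h1 : ∀ i ∈ (univ : Finset (Fin l)),
      ((∑ j : Fin l, if (i : ℕ) = (j : ℕ) + 1 then a i * b j else 0) +
        ∑ j : Fin l, if (i : ℕ) = (j : ℕ) + 1 then b i * a j else 0) =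
      ∑ j : Fin l, if (i : ℕ) = (j : ℕ) + 1 then a i * b j + b i * a j else 0 := by
    intro i _
    rw [← Finset.sum_add_distrib]
    apply Finset.sum_congr rfl
    intro j _
    split <;> simp
  rw [Finset.sum_congr rfl h1, Finset.sum_comm]
  have h2 : ∀ j ∈ (univ : Finset (Fin l)),
      (∑ i : Fin l, if (i : ℕ) = (j : ℕ) + 1 then a i * b j + b i * a j else 0) =
      extv a ((j : ℕ) + 1) * extv b (j : ℕ) + extv a (j : ℕ) * extv b ((j : ℕ) + 1) := by
    intro j _
    rw [fin_sum_ite ((j : ℕ) + 1) (fun i => a i * b j + b i * a j)]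
    unfold extv
    split
    · next h =>
      rw [dif_pos j.isLt, dif_pos j.isLt]
      simp only [Fin.eta]
      ring
    · ring
  rw [Finset.sum_congr rfl h2, S1, ← Fin.sum_univ_eq_sum_range]

lemma neg_one_zpow_odd (n : ℤ) (h : n % 2 = 1) : (-1 : ℤˣ) ^ n = -1 := by
  have hn : n = 2 * (n / 2) + 1 := by omega
  have h1 : (-1 : ℤˣ) ^ (2:ℤ) = 1 := by
    rw [show (2:ℤ) = 1 + 1 by norm_num, zpow_add, zpow_one]
    exact Int.units_mul_self _
  rw [hn, zpow_add, zpow_mul, h1, one_zpow, zpow_one, one_mul]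


/-- If `α`, `α'`, and `α + α'` are all roots of `B_l`, then `ε(α,α') = -ε(α',α)`. -/
theorem eps_antisymm_on_roots (l : ℕ) (a b : Fin l → ℤ)
    (ha : a ∈ RootsB l) (hb : b ∈ RootsB l) (hab : a + b ∈ RootsB l) :
    epsf l a b = -epsf l b a := by
  have hprod : epsf l a b * epsf l b a = -1 := by
    rw [epsf_eq, epsf_eq, ← zpow_add, E_add_E]
    exact neg_one_zpow_odd _ (S1_odd ha hb hab)
  have h2 : epsf l b a * epsf l b a = 1 := Int.units_mul_self _
  calc epsf l a b = epsf l a b * (epsf l b a * epsf l b a) := by rw [h2, mul_one]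
    _ = (epsf l a b * epsf l b a) * epsf l b a := by rw [mul_assoc]
    _ = -epsf l b a := by rw [hprod]; exact neg_one_mul _
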